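/- Let m ≥ 2. Define vector fields Y_1(t) := (0, t_1+1, 2t_2, 3t_3, …, (m−1)t_{m−1}) on ℂ^m and Y_k := δ_{k−1} ∘ Y_1 (pointwise truncated product) for 2 ≤ k ≤ m−1. Then for every 1 ≤ k ≤ m−1: L_{Y_k}(∘)(Z,W) = 0 for all differentiable vector fields Z, W, and [Y_k, E] = 0. That is, each Y_k is an infinitesimal symmetry of the standard model (ℂ^m, ∘, e, E). -/

import Mathlib

open scoped BigOperators

noncomputable section

/-- The truncated-polynomial multiplication on `ℂ^m ≅ ℂ[X]/(X^m)`: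
`(u ∘ v)_k = Σ_{i+j=k} u_i v_j`. -/
def tmul {m : ℕ} (u v : Fin m → ℂ) : Fin m → ℂ :=
  fun k => ∑ i : Fin m, ∑ j : Fin m,
    if (i : ℕ) + (j : ℕ) = (k : ℕ) then u i * v j else 0

/-- The `i`-th standard basis vector of `ℂ^m` (zero if `i ≥ m`); `std 0` is the unit `e`. -/
def std {m : ℕ} (i : ℕ) : Fin m → ℂ := fun j => if (j : ℕ) = i then 1 else 0

/-- Lie bracket of vector fields on `ℂ^m`: `[X,Y](p) = DY(p)(X(p)) − DX(p)(Y(p))`. -/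
def bracket {m : ℕ} (X Y : (Fin m → ℂ) → Fin m → ℂ) : (Fin m → ℂ) → Fin m → ℂ :=
  fun p => fderiv ℂ Y p (X p) - fderiv ℂ X p (Y p)

/-- Pointwise truncated product of vector fields. -/
def pmul {m : ℕ} (X Y : (Fin m → ℂ) → Fin m → ℂ) : (Fin m → ℂ) → Fin m → ℂ :=
  fun p => tmul (X p) (Y p)

/-- Lie derivative of the multiplication `∘` along `X`:
`L_X(∘)(Y,Z) = [X, Y∘Z] − [X,Y]∘Z − Y∘[X,Z]`. -/
def lieD {m : ℕ} (X Y Z : (Fin m → ℂ) → Fin m → ℂ) : (Fin m → ℂ) → Fin m → ℂ :=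
  fun p => bracket X (pmul Y Z) p - tmul (bracket X Y p) (Z p) - tmul (Y p) (bracket X Z p)

/-- The Euler field `E(t) = (t_0 + a, t_1 + 1, t_2, …, t_{m−1})`. -/
def Efield {m : ℕ} (a : ℂ) : (Fin m → ℂ) → Fin m → ℂ :=
  fun p => p + a • std 0 + std 1

/-- The vector field `Y_1(t) = (0, t_1+1, 2t_2, 3t_3, …, (m−1)t_{m−1})`. -/
def Yone {m : ℕ} : (Fin m → ℂ) → Fin m → ℂ :=
  fun p j => if (j : ℕ) = 1 then p j + 1 else ((j : ℕ) : ℂ) * p j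

/-- The infinitesimal symmetries `Y_1` and `Y_k := δ_{k−1} ∘ Y_1` for `k ≥ 2`. -/
def Ysym {m : ℕ} : ℕ → (Fin m → ℂ) → Fin m → ℂ
  | 1 => Yone
  | k => fun p => tmul (std (k - 1)) (Yone p)

namespace Stmt5Aux

variable {m : ℕ}

/-! ### Algebraic lemmas about `tmul` -/

lemma tmul_add_left (u u' v : Fin m → ℂ) : tmul (u + u') v = tmul u v + tmul u' v := by
  funext k
  simp only [tmul, Pi.add_apply]
  rw [← Finset.sum_add_distrib]
  refine Finset.sum_congr rfl fun i _ => ?_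
  rw [← Finset.sum_add_distrib]
  refine Finset.sum_congr rfl fun j _ => ?_
  split_ifs <;> ring

lemma tmul_add_right (u v v' : Fin m → ℂ) : tmul u (v + v') = tmul u v + tmul u v' := by
  funext k
  simp only [tmul, Pi.add_apply]
  rw [← Finset.sum_add_distrib]
  refine Finset.sum_congr rfl fun i _ => ?_
  rw [← Finset.sum_add_distrib]
  refine Finset.sum_congr rfl fun j _ => ?_
  split_ifs <;> ring

lemma tmul_smul_left (c : ℂ) (u v : Fin m → ℂ) : tmul (c • u) v = c • tmul u v := by
  funext k
  simp only [tmul, Pi.smul_apply, smul_eq_mul, Finset.mul_sum]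
  refine Finset.sum_congr rfl fun i _ => Finset.sum_congr rfl fun j _ => ?_
  split_ifs <;> ring

lemma tmul_smul_right (c : ℂ) (u v : Fin m → ℂ) : tmul u (c • v) = c • tmul u v := by
  funext k
  simp only [tmul, Pi.smul_apply, smul_eq_mul, Finset.mul_sum]
  refine Finset.sum_congr rfl fun i _ => Finset.sum_congr rfl fun j _ => ?_
  split_ifs <;> ring

lemma tmul_sub_left (u u' v : Fin m → ℂ) : tmul (u - u') v = tmul u v - tmul u' v := by
  funext k
  simp only [tmul, Pi.sub_apply]
  rw [← Finset.sum_sub_distrib]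
  refine Finset.sum_congr rfl fun i _ => ?_
  rw [← Finset.sum_sub_distrib]
  refine Finset.sum_congr rfl fun j _ => ?_
  split_ifs <;> ring

lemma tmul_sub_right (u v v' : Fin m → ℂ) : tmul u (v - v') = tmul u v - tmul u v' := by
  funext k
  simp only [tmul, Pi.sub_apply]
  rw [← Finset.sum_sub_distrib]
  refine Finset.sum_congr rfl fun i _ => ?_
  rw [← Finset.sum_sub_distrib]
  refine Finset.sum_congr rfl fun j _ => ?_
  split_ifs <;> ring

lemma tmul_comm (u v : Fin m → ℂ) : tmul u v = tmul v u := by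
  funext k
  simp only [tmul]
  rw [Finset.sum_comm]
  refine Finset.sum_congr rfl fun j _ => Finset.sum_congr rfl fun i _ => ?_
  rw [Nat.add_comm (j : ℕ) (i : ℕ)]
  split_ifs <;> ring

/-- extension by zero to `ℕ` -/
def extc (u : Fin m → ℂ) : ℕ → ℂ := fun i => if h : i < m then u ⟨i, h⟩ else 0

lemma extc_coe (u : Fin m → ℂ) (i : Fin m) : extc u (i : ℕ) = u i := by
  simp [extc, i.isLt]

lemma tmul_eq_range (u v : Fin m → ℂ) (k : Fin m) :
    tmul u v k = ∑ i ∈ Finset.range ((k : ℕ) + 1), extc u i * extc v ((k : ℕ) - i) := by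
  have h1 : ∀ i : Fin m,
      (∑ j : Fin m, if (i : ℕ) + (j : ℕ) = (k : ℕ) then u i * v j else 0)
        = if (i : ℕ) ≤ (k : ℕ) then extc u (i : ℕ) * extc v ((k : ℕ) - (i : ℕ)) else 0 := by
    intro i
    by_cases h : (i : ℕ) ≤ (k : ℕ)
    · have hlt : (k : ℕ) - (i : ℕ) < m := Nat.lt_of_le_of_lt (Nat.sub_le _ _) k.isLt
      rw [if_pos h, Finset.sum_eq_single (⟨(k : ℕ) - (i : ℕ), hlt⟩ : Fin m)]
      · simp only [Fin.val_mk]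
        rw [if_pos (by omega), extc_coe]
        simp [extc, hlt]
      · intro b _ hb
        refine if_neg (fun hc => hb (Fin.ext ?_))
        simp only [Fin.val_mk]
        omega
      · simp
    · rw [if_neg h]
      refine Finset.sum_eq_zero fun j _ => if_neg (by omega)
  rw [tmul]
  rw [Finset.sum_congr rfl fun i _ => h1 i]
  rw [Fin.sum_univ_eq_sum_range
    (fun i => if i ≤ (k : ℕ) then extc u i * extc v ((k : ℕ) - i) else 0) m]
  rw [← Finset.sum_filter]
  congr 1
  ext x
  simp only [Finset.mem_filter, Finset.mem_range, Nat.lt_succ_iff]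
  have := k.isLt
  omega

def toPS (u : Fin m → ℂ) : PowerSeries ℂ := PowerSeries.mk (extc u)

lemma coeff_toPS (u : Fin m → ℂ) (n : ℕ) : PowerSeries.coeff n (toPS u) = extc u n :=
  PowerSeries.coeff_mk _ _

lemma coeff_toPS_mul (u v : Fin m → ℂ) (k : Fin m) :
    PowerSeries.coeff (k : ℕ) (toPS u * toPS v) = tmul u v k := by
  rw [PowerSeries.coeff_mul, Finset.Nat.sum_antidiagonal_eq_sum_range_succ_mk, tmul_eq_range]
  exact Finset.sum_congr rfl fun i _ => by rw [coeff_toPS, coeff_toPS]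

lemma coeff_toPS_mul' (u v : Fin m → ℂ) {n : ℕ} (hn : n < m) :
    PowerSeries.coeff n (toPS u * toPS v) = extc (tmul u v) n := by
  have h := coeff_toPS_mul u v ⟨n, hn⟩
  rw [show ((⟨n, hn⟩ : Fin m) : ℕ) = n from rfl] at h
  rw [h]
  simp [extc, hn]

lemma tmul_assoc (u v w : Fin m → ℂ) : tmul (tmul u v) w = tmul u (tmul v w) := by
  funext k
  have hk := k.isLt
  have L : tmul (tmul u v) w k
      = PowerSeries.coeff (k : ℕ) ((toPS u * toPS v) * toPS w) := by
    rw [← coeff_toPS_mul (tmul u v) w k, PowerSeries.coeff_mul, PowerSeries.coeff_mul]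
    refine Finset.sum_congr rfl fun p hp => ?_
    have hp1 : p.1 ≤ (k : ℕ) := by
      have := Finset.HasAntidiagonal.mem_antidiagonal.mp hp; omega
    rw [coeff_toPS_mul' u v (lt_of_le_of_lt hp1 hk), coeff_toPS, coeff_toPS]
  have R : tmul u (tmul v w) k
      = PowerSeries.coeff (k : ℕ) (toPS u * (toPS v * toPS w)) := by
    rw [← coeff_toPS_mul u (tmul v w) k, PowerSeries.coeff_mul, PowerSeries.coeff_mul]
    refine Finset.sum_congr rfl fun p hp => ?_
    have hp2 : p.2 ≤ (k : ℕ) := by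
      have := Finset.HasAntidiagonal.mem_antidiagonal.mp hp; omega
    rw [coeff_toPS_mul' v w (lt_of_le_of_lt hp2 hk), coeff_toPS, coeff_toPS]
  rw [L, R, mul_assoc]

lemma tmul_std_zero (u : Fin m → ℂ) : tmul (std 0) u = u := by
  funext k
  have h0 : (0 : ℕ) < m := Nat.lt_of_le_of_lt (Nat.zero_le _) k.isLt
  rw [tmul, Finset.sum_eq_single (⟨0, h0⟩ : Fin m)]
  · rw [Finset.sum_eq_single k]
    · rw [if_pos (by simp)]
      simp [std]
    · intro b _ hb
      exact if_neg (fun hc => hb (Fin.ext (by simpa using hc)))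
    · simp
  · intro b _ hb
    refine Finset.sum_eq_zero fun j _ => ?_
    have hbne : (b : ℕ) ≠ 0 := fun h => hb (Fin.ext h)
    simp [std, hbne]
  · simp

/-! ### The Euler-type coefficient operator -/

def Dop (u : Fin m → ℂ) : Fin m → ℂ := fun j => ((j : ℕ) : ℂ) * u j

lemma Dop_add (u v : Fin m → ℂ) : Dop (u + v) = Dop u + Dop v := by
  funext j; simp [Dop]; ring

lemma Dop_smul (c : ℂ) (u : Fin m → ℂ) : Dop (c • u) = c • Dop u := by
  funext j; simp [Dop]; ring

lemma Dop_std_zero : Dop (std 0 : Fin m → ℂ) = 0 := by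
  funext j
  simp only [Dop, std]
  by_cases h : (j : ℕ) = 0 <;> simp [h]

lemma Dop_std_one : Dop (std 1 : Fin m → ℂ) = std 1 := by
  funext j
  simp only [Dop, std]
  by_cases h : (j : ℕ) = 1 <;> simp [h]

lemma Dop_tmul (u v : Fin m → ℂ) :
    Dop (tmul u v) = tmul (Dop u) v + tmul u (Dop v) := by
  funext k
  simp only [Dop, tmul, Pi.add_apply, Finset.mul_sum]
  rw [← Finset.sum_add_distrib]
  refine Finset.sum_congr rfl fun i _ => ?_
  rw [← Finset.sum_add_distrib]
  refine Finset.sum_congr rfl fun j _ => ?_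
  split_ifs with h
  · have hc : ((k : ℕ) : ℂ) = ((i : ℕ) : ℂ) + ((j : ℕ) : ℂ) := by
      exact_mod_cast congrArg (Nat.cast : ℕ → ℂ) h.symm
    rw [hc]; ring
  · simp

lemma Yone_eq (p : Fin m → ℂ) : Yone p = Dop p + std 1 := by
  funext j
  by_cases h : (j : ℕ) = 1
  · have : ((j : ℕ) : ℂ) = 1 := by rw [h]; norm_num
    simp [Yone, Dop, std, h, this]
  · simp [Yone, Dop, std, h]

/-! ### Linear/analytic setup -/

def tmulL : (Fin m → ℂ) →ₗ[ℂ] (Fin m → ℂ) →ₗ[ℂ] (Fin m → ℂ) :=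
  LinearMap.mk₂ ℂ tmul tmul_add_left tmul_smul_left tmul_add_right tmul_smul_right

def tmulCLM : (Fin m → ℂ) →L[ℂ] (Fin m → ℂ) →L[ℂ] (Fin m → ℂ) :=
  LinearMap.toContinuousLinearMap
    ((LinearMap.toContinuousLinearMap :
        ((Fin m → ℂ) →ₗ[ℂ] (Fin m → ℂ)) ≃ₗ[ℂ] ((Fin m → ℂ) →L[ℂ] (Fin m → ℂ))).toLinearMap.comp
      tmulL)

lemma tmulCLM_apply (u v : Fin m → ℂ) : tmulCLM u v = tmul u v := by
  simp [tmulCLM, tmulL]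

def DopL : (Fin m → ℂ) →ₗ[ℂ] (Fin m → ℂ) where
  toFun := Dop
  map_add' := Dop_add
  map_smul' := Dop_smul

def XL (c : Fin m → ℂ) : (Fin m → ℂ) →L[ℂ] (Fin m → ℂ) :=
  LinearMap.toContinuousLinearMap ((tmulL c).comp DopL)

lemma XL_apply (c v : Fin m → ℂ) : XL c v = tmul c (Dop v) := by
  simp [XL, tmulL, DopL]

def Xfield (c : Fin m → ℂ) : (Fin m → ℂ) → Fin m → ℂ :=
  fun p => tmul c (Dop p) + tmul c (std 1)

lemma hasFDerivAt_Xfield (c p : Fin m → ℂ) : HasFDerivAt (Xfield c) (XL c) p := by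
  have h : Xfield c = fun q => XL c q + tmul c (std 1) := by
    funext q; rw [Xfield, XL_apply]
  rw [h]
  exact (XL c).hasFDerivAt.add_const _

lemma fderiv_Xfield (c p : Fin m → ℂ) : fderiv ℂ (Xfield c) p = XL c :=
  (hasFDerivAt_Xfield c p).fderiv

lemma fderiv_pmul_apply {Z W : (Fin m → ℂ) → Fin m → ℂ}
    (hZ : Differentiable ℂ Z) (hW : Differentiable ℂ W) (p v : Fin m → ℂ) :
    fderiv ℂ (pmul Z W) p v
      = tmul (fderiv ℂ Z p v) (W p) + tmul (Z p) (fderiv ℂ W p v) := by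
  have heq : pmul Z W = fun q => tmulCLM (Z q) (W q) := by
    funext q; rw [pmul, tmulCLM_apply]
  rw [heq, ContinuousLinearMap.fderiv_of_bilinear tmulCLM (hZ p) (hW p)]
  simp [ContinuousLinearMap.precompR, ContinuousLinearMap.precompL, tmulCLM_apply, add_comm]

lemma Ysym_eq (k : ℕ) (hk : 1 ≤ k) :
    (Ysym k : (Fin m → ℂ) → Fin m → ℂ) = Xfield (std (k - 1)) := by
  match k, hk with
  | 1, _ =>
    show (Yone : (Fin m → ℂ) → Fin m → ℂ) = _
    funext p
    rw [Yone_eq, Xfield, tmul_std_zero, tmul_std_zero]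
  | (n + 2), _ =>
    show (fun p : Fin m → ℂ => tmul (std (n + 2 - 1)) (Yone p)) = _
    funext p
    rw [Yone_eq, Xfield, tmul_add_right]

end Stmt5Aux

open Stmt5Aux

/-- Each `Y_k`, `1 ≤ k ≤ m−1`, is an infinitesimal symmetry of the standard
model `(ℂ^m, ∘, e, E)`: `L_{Y_k}(∘)(Z,W) = 0` for all differentiable vector fields `Z, W`,
and `[Y_k, E] = 0`. -/
theorem stmt5 {m : ℕ} (hm : 2 ≤ m) (a : ℂ) (k : ℕ) (hk1 : 1 ≤ k) (hk2 : k ≤ m - 1) :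
    (∀ Z W : (Fin m → ℂ) → Fin m → ℂ, Differentiable ℂ Z → Differentiable ℂ W →
        lieD (Ysym k) Z W = 0) ∧
      bracket (Ysym k) (Efield a) = (0 : (Fin m → ℂ) → Fin m → ℂ) := by
  rw [Ysym_eq k hk1]
  set c : Fin m → ℂ := std (k - 1) with hc
  constructor
  · intro Z W hZ hW
    funext p
    have hf : fderiv ℂ (Xfield c) p = XL c := fderiv_Xfield c p
    have hB1 : bracket (Xfield c) (pmul Z W) p
        = tmul (fderiv ℂ Z p (Xfield c p)) (W p) + tmul (Z p) (fderiv ℂ W p (Xfield c p))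
          - tmul c (Dop (tmul (Z p) (W p))) := by
      rw [bracket, hf, XL_apply, fderiv_pmul_apply hZ hW, pmul]
    have hB2 : bracket (Xfield c) Z p
        = fderiv ℂ Z p (Xfield c p) - tmul c (Dop (Z p)) := by
      rw [bracket, hf, XL_apply]
    have hB3 : bracket (Xfield c) W p
        = fderiv ℂ W p (Xfield c p) - tmul c (Dop (W p)) := by
      rw [bracket, hf, XL_apply]
    rw [lieD, hB1, hB2, hB3, tmul_sub_left, tmul_sub_right]
    rw [Dop_tmul, tmul_add_right, ← tmul_assoc c (Dop (Z p)) (W p),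
      tmul_comm (Z p) (Dop (W p)), ← tmul_assoc c (Dop (W p)) (Z p),
      tmul_comm (tmul c (Dop (W p))) (Z p)]
    show _ = (0 : Fin m → ℂ)
    abel
  · funext p
    have hfE : fderiv ℂ (Efield a) p = ContinuousLinearMap.id ℂ (Fin m → ℂ) := by
      have h : Efield a = fun q : Fin m → ℂ =>
          (ContinuousLinearMap.id ℂ (Fin m → ℂ)) q + (a • std 0 + std 1) := by
        funext q
        show q + a • std 0 + std 1 = q + (a • std 0 + std 1)
        rw [add_assoc]
      rw [h]
      exact (((ContinuousLinearMap.id ℂ (Fin m → ℂ)).hasFDerivAt).add_const _).fderiv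
    rw [bracket, hfE, fderiv_Xfield, XL_apply]
    show Xfield c p - tmul c (Dop (p + a • std 0 + std 1)) = (0 : Fin m → ℂ)
    rw [Dop_add, Dop_add, Dop_smul, Dop_std_zero, Dop_std_one, smul_zero, add_zero,
      tmul_add_right, Xfield]
    abel
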